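/- For a prime p ≥ 7, let A_{00} = {a ∈ Z/pZ : a is a nonzero quadratic residue and a+1 is a nonzero quadratic residue mod p}. Then ∑_{a ∈ A_{00}} (a^2 + a) ≡ 1/32 (mod p), where 1/32 denotes the inverse of 32 in Z/pZ. -/

import Mathlib

open Finset

lemma sumA00_fiber (p : ℕ) [Fact p.Prime] (h2 : (2 : ZMod p) ≠ 0)
    (a x y : ZMod p) (hx : a = x * x) (hy : a + 1 = y * y) :
    Finset.univ.filter (fun t : ZMod p => t ≠ 0 ∧ ((t⁻¹ - t) / 2) ^ 2 = a)
      = {y - x, x - y, y + x, -(y + x)} := by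
  have hx2 : x ^ 2 = a := by linear_combination -hx
  have hy2 : y ^ 2 = a + 1 := by linear_combination -hy
  have hxy : (y - x) * (y + x) = 1 := by linear_combination hy2 - hx2
  have hne1 : y - x ≠ 0 := left_ne_zero_of_mul_eq_one hxy
  have hne2 : y + x ≠ 0 := right_ne_zero_of_mul_eq_one hxy
  have h4 : (2:ZMod p)^2 ≠ 0 := pow_ne_zero _ h2
  ext t
  simp only [mem_filter, mem_univ, true_and, mem_insert, mem_singleton]
  constructor
  · rintro ⟨ht0, hteq⟩
    have hti : t * t⁻¹ = 1 := mul_inv_cancel₀ ht0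
    rw [div_pow, div_eq_iff h4] at hteq
    have e2 : (1 - t ^ 2) ^ 2 = 4 * a * t ^ 2 := by
      linear_combination t ^ 2 * hteq - (t * t⁻¹ + 1 - 2 * t ^ 2) * hti
    have key : (y - x - t) * (y + x + t) * ((x - y - t) * (y + x - t)) = 0 := by
      linear_combination -e2 + (2*x^2 + 2*t^2 - y^2 - a - 1) * hy2 + (2 + 2*t^2 - x^2 + a) * hx2
    rcases mul_eq_zero.mp key with h | h
    · rcases mul_eq_zero.mp h with h' | h'
      · exact Or.inl (by linear_combination -h')
      · exact Or.inr <| Or.inr <| Or.inr (by linear_combination h')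
    · rcases mul_eq_zero.mp h with h' | h'
      · exact Or.inr <| Or.inl (by linear_combination -h')
      · exact Or.inr <| Or.inr <| Or.inl (by linear_combination -h')
  · rintro (rfl | rfl | rfl | rfl)
    · refine ⟨hne1, ?_⟩
      rw [inv_eq_of_mul_eq_one_right hxy]
      rw [div_pow, div_eq_iff h4]
      linear_combination 4 * hx2
    · have h' : (x - y) * (-(y + x)) = 1 := by linear_combination hxy
      refine ⟨left_ne_zero_of_mul_eq_one h', ?_⟩
      rw [inv_eq_of_mul_eq_one_right h']
      rw [div_pow, div_eq_iff h4]
      linear_combination 4 * hx2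
    · have h' : (y + x) * (y - x) = 1 := by linear_combination hxy
      refine ⟨hne2, ?_⟩
      rw [inv_eq_of_mul_eq_one_right h']
      rw [div_pow, div_eq_iff h4]
      linear_combination 4 * hx2
    · have h' : (-(y + x)) * (x - y) = 1 := by linear_combination hxy
      refine ⟨neg_ne_zero.mpr hne2, ?_⟩
      rw [inv_eq_of_mul_eq_one_right h']
      rw [div_pow, div_eq_iff h4]
      linear_combination 4 * hx2

lemma sumA00_fiber_card (p : ℕ) [Fact p.Prime] (h2 : (2 : ZMod p) ≠ 0)
    (a x y : ZMod p) (hx0 : x ≠ 0) (hy0 : y ≠ 0) (hx : a = x * x) (hy : a + 1 = y * y) :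
    (Finset.univ.filter (fun t : ZMod p => t ≠ 0 ∧ ((t⁻¹ - t) / 2) ^ 2 = a)).card = 4 := by
  rw [sumA00_fiber p h2 a x y hx hy]
  have hx2 : x ^ 2 = a := by linear_combination -hx
  have hy2 : y ^ 2 = a + 1 := by linear_combination -hy
  have hxy : (y - x) * (y + x) = 1 := by linear_combination hy2 - hx2
  have hne1 : y - x ≠ 0 := left_ne_zero_of_mul_eq_one hxy
  have hne2 : y + x ≠ 0 := right_ne_zero_of_mul_eq_one hxy
  have two_mul_ne : ∀ u : ZMod p, u ≠ 0 → (2 : ZMod p) * u ≠ 0 := fun u hu => mul_ne_zero h2 hu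
  have d1 : y - x ≠ x - y := fun h => two_mul_ne (y - x) hne1 (by linear_combination h)
  have d2 : y - x ≠ y + x := fun h => two_mul_ne x hx0 (by linear_combination -h)
  have d3 : y - x ≠ -(y + x) := fun h => two_mul_ne y hy0 (by linear_combination h)
  have d4 : x - y ≠ y + x := fun h => two_mul_ne y hy0 (by linear_combination -h)
  have d5 : x - y ≠ -(y + x) := fun h => two_mul_ne x hx0 (by linear_combination h)
  have d6 : y + x ≠ -(y + x) := fun h => two_mul_ne (y + x) hne2 (by linear_combination h)
  rw [card_insert_of_notMem (by
        simp only [mem_insert, mem_singleton, not_or]; exact ⟨d1, d2, d3⟩),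
      card_insert_of_notMem (by
        simp only [mem_insert, mem_singleton, not_or]; exact ⟨d4, d5⟩),
      card_insert_of_notMem (by
        simp only [mem_singleton]; exact d6), card_singleton]

open scoped Classical in
theorem sum_A00 (p : ℕ) [Fact p.Prime] (hp7 : 7 ≤ p) :
    (∑ a ∈ Finset.univ.filter
        (fun a : ZMod p => (a ≠ 0 ∧ IsSquare a) ∧ (a + 1 ≠ 0 ∧ IsSquare (a + 1))),
        (a ^ 2 + a)) = (32 : ZMod p)⁻¹ := by
  have hp : p.Prime := Fact.out
  have h2 : (2 : ZMod p) ≠ 0 := by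
    have h : ((2:ℕ) : ZMod p) ≠ 0 := by
      rw [Ne, ZMod.natCast_eq_zero_iff]
      intro h
      have := Nat.le_of_dvd (by norm_num) h
      omega
    simpa using h
  have h16 : (16 : ZMod p) ≠ 0 := by
    have h : (16 : ZMod p) = 2 ^ 4 := by norm_num
    rw [h]; exact pow_ne_zero _ h2
  set F : ZMod p → ZMod p := fun a => a ^ 2 + a with hFdef
  set α : ZMod p → ZMod p := fun t => ((t⁻¹ - t) / 2) ^ 2 with hαdef
  set U : Finset (ZMod p) := Finset.univ.filter (fun t : ZMod p => t ≠ 0) with hUdef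
  set S : Finset (ZMod p) := Finset.univ.filter
      (fun a : ZMod p => (a ≠ 0 ∧ IsSquare a) ∧ (a + 1 ≠ 0 ∧ IsSquare (a + 1))) with hSdef
  -- fiberwise decomposition
  have hfib : ∑ j : ZMod p, (U.filter (fun t => α t = j)).card • F j = ∑ t ∈ U, F (α t) := by
    rw [← Finset.sum_fiberwise' U α F]
    exact Finset.sum_congr rfl fun j _ => (Finset.sum_const _).symm
  -- fibers as filters over univ
  have hfilter : ∀ j : ZMod p, U.filter (fun t => α t = j)
      = Finset.univ.filter (fun t : ZMod p => t ≠ 0 ∧ ((t⁻¹ - t) / 2) ^ 2 = j) := by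
    intro j
    rw [hUdef, Finset.filter_filter]
  -- terms outside S vanish
  have hzero : ∀ j : ZMod p, j ∉ S → (U.filter (fun t => α t = j)).card • F j = 0 := by
    intro j hj
    by_cases hj0 : j = 0
    · subst hj0
      have : F 0 = 0 := by simp [hFdef]
      rw [this, smul_zero]
    by_cases hj1 : j = -1
    · subst hj1
      have : F (-1) = 0 := by norm_num [hFdef]
      rw [this, smul_zero]
    -- fiber is empty
    have hemp : U.filter (fun t => α t = j) = ∅ := by
      rw [Finset.eq_empty_iff_forall_notMem]
      intro t ht
      rw [hfilter j, Finset.mem_filter] at ht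
      obtain ⟨-, ht0, hteq⟩ := ht
      have hti : t * t⁻¹ = 1 := mul_inv_cancel₀ ht0
      have h4 : (2:ZMod p)^2 ≠ 0 := pow_ne_zero _ h2
      apply hj
      rw [hSdef, Finset.mem_filter]
      refine ⟨Finset.mem_univ _, ⟨hj0, ⟨(t⁻¹ - t)/2, ?_⟩⟩, ⟨fun h => hj1 (by linear_combination h), ⟨(t⁻¹ + t)/2, ?_⟩⟩⟩
      · rw [div_mul_div_comm, eq_div_iff (mul_ne_zero h2 h2)]
        rw [div_pow, div_eq_iff h4] at hteq
        linear_combination -hteq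
      · rw [div_mul_div_comm, eq_div_iff (mul_ne_zero h2 h2)]
        rw [div_pow, div_eq_iff h4] at hteq
        linear_combination -hteq - 4 * hti
    rw [hemp]
    simp
  -- fibers over S have four elements
  have hfour : ∀ j : ZMod p, j ∈ S → (U.filter (fun t => α t = j)).card = 4 := by
    intro j hj
    rw [hSdef, Finset.mem_filter] at hj
    obtain ⟨-, ⟨hj0, x, hx⟩, hj1, y, hy⟩ := hj
    have hx0 : x ≠ 0 := by rintro rfl; exact hj0 (by simpa using hx)
    have hy0 : y ≠ 0 := by rintro rfl; exact hj1 (by simpa using hy)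
    rw [hfilter j]
    exact sumA00_fiber_card p h2 j x y hx0 hy0 hx hy
  -- left side: 4 * sum
  have hleft : ∑ j : ZMod p, (U.filter (fun t => α t = j)).card • F j
      = (4 : ZMod p) * ∑ j ∈ S, F j := by
    rw [← Finset.sum_subset (Finset.subset_univ S) (fun j _ hj => hzero j hj)]
    rw [Finset.mul_sum]
    refine Finset.sum_congr rfl fun j hj => ?_
    rw [hfour j hj]
    rw [nsmul_eq_mul]
    norm_num
  -- right side: explicit computation
  have h2i : (2:ZMod p) * 2⁻¹ = 1 := mul_inv_cancel₀ h2
  have hpt : ∀ t : ZMod p, t ≠ 0 → F (α t) = (t⁻¹^4 + t^4 - 2) / 16 := by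
    intro t ht0
    have hti : t * t⁻¹ = 1 := mul_inv_cancel₀ ht0
    rw [eq_div_iff h16]
    simp only [hFdef, hαdef, div_eq_mul_inv]
    linear_combination (-4*t⁻¹^2 - 4*t^2 + 6*t⁻¹*t - 2) * hti +
      ((t⁻¹-t)^4 * (8*(2⁻¹:ZMod p)^3 + 4*(2⁻¹:ZMod p)^2 + 2*(2⁻¹:ZMod p) + 1)
        + (t⁻¹-t)^2 * (4*(2*(2⁻¹:ZMod p)+1))) * h2i
  have hUerase : U = Finset.univ.erase (0 : ZMod p) := by
    rw [hUdef, Finset.filter_ne']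
  have hsum4 : ∑ t ∈ U, t^4 = 0 := by
    rw [hUerase, Finset.sum_erase _ (by norm_num)]
    exact FiniteField.sum_pow_lt_card_sub_one (ZMod p) 4 (by rw [ZMod.card]; omega)
  have hsuminv : ∑ t ∈ U, t⁻¹^4 = 0 := by
    rw [← hsum4]
    apply Finset.sum_nbij' (i := fun t => t⁻¹) (j := fun t => t⁻¹)
    · intro a ha
      rw [hUdef, Finset.mem_filter] at ha ⊢
      exact ⟨Finset.mem_univ _, inv_ne_zero ha.2⟩
    · intro a ha
      rw [hUdef, Finset.mem_filter] at ha ⊢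
      exact ⟨Finset.mem_univ _, inv_ne_zero ha.2⟩
    · intro a _; exact inv_inv a
    · intro a _; exact inv_inv a
    · intro a _; rfl
  have hUcard : (U.card : ZMod p) = -1 := by
    rw [hUerase, Finset.card_erase_of_mem (Finset.mem_univ _), Finset.card_univ, ZMod.card]
    have h1 : (1:ℕ) ≤ p := by omega
    rw [Nat.cast_sub h1, ZMod.natCast_self]
    ring
  have hright : ∑ t ∈ U, F (α t) = (2 : ZMod p) / 16 := by
    rw [Finset.sum_congr rfl (fun t ht => hpt t (by rw [hUdef, Finset.mem_filter] at ht; exact ht.2))]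
    rw [← Finset.sum_div]
    congr 1
    rw [Finset.sum_sub_distrib, Finset.sum_add_distrib, hsum4, hsuminv, Finset.sum_const,
      nsmul_eq_mul, hUcard]
    ring
  -- finish
  have hX : (4 : ZMod p) * ∑ j ∈ S, F j = (2 : ZMod p) / 16 := by
    rw [← hleft, hfib, hright]
  have h32 : (∑ j ∈ S, F j) * 32 = 1 := by
    have h1 : (16 : ZMod p) * ((4 : ZMod p) * ∑ j ∈ S, F j) = 16 * (2 / 16) := by rw [hX]
    rw [mul_div_cancel₀ _ h16] at h1
    have h2' : (2 : ZMod p) * ((∑ j ∈ S, F j) * 32) = 2 * 1 := by linear_combination h1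
    exact mul_left_cancel₀ h2 h2'
  exact eq_inv_of_mul_eq_one_left h32
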